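/- arXiv:1003.5501 — 2 statements merged into one kernel-verified Lean document; each statement's English description precedes it below -/
import Mathlib

section
/- Assume κ ≠ 0, let ν be real, let m ≥ 0 be an integer, and for each integer n ≥ 0 define Φ_{m,n}(z) = (∇_{ν+κ} ∘ ∇_{ν+2κ} ∘ ⋯ ∘ ∇_{ν+mκ})[w ↦ (1+κ|w|²)^{−(ν/κ+m)} w^n](z) on Ω = {z : 1+κ|z|² > 0} (the composition being the identity when m = 0). If n ≠ n′ and the function z ↦ Φ_{m,n}(z) · conj(Φ_{m,n′}(z)) · (1+κ|z|²)^{−2} is Lebesgue-integrable on Ω, then ∫_Ω Φ_{m,n}(z) · conj(Φ_{m,n′}(z)) · (1+κ|z|²)^{−2} dλ(z) = 0, where dλ is Lebesgue measure on ℂ ≅ ℝ². -/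
open Complex MeasureTheory Filter

/-- Wirtinger derivative ∂f/∂z = (1/2)(∂f/∂x − i ∂f/∂y). -/
noncomputable def wderiv (f : ℂ → ℂ) (z : ℂ) : ℂ :=
  (fderiv ℝ f z 1 - Complex.I * fderiv ℝ f z Complex.I) / 2

/-- Anti-holomorphic Wirtinger derivative ∂f/∂z̄ = (1/2)(∂f/∂x + i ∂f/∂y). -/
noncomputable def wderivBar (f : ℂ → ℂ) (z : ℂ) : ℂ :=
  (fderiv ℝ f z 1 + Complex.I * fderiv ℝ f z Complex.I) / 2

/-- Twisted Laplacian L_κ^ν. -/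
noncomputable def twistedLap (κ ν : ℝ) (f : ℂ → ℂ) (z : ℂ) : ℂ :=
  -(((1 + κ * Complex.normSq z : ℝ) : ℂ) ^ 2 * wderiv (wderivBar f) z
    + (ν : ℂ) * ((1 + κ * Complex.normSq z : ℝ) : ℂ) *
        (z * wderiv f z - (starRingEnd ℂ) z * wderivBar f z)
    - (ν : ℂ) ^ 2 * ((Complex.normSq z : ℝ) : ℂ) * f z)

/-- (∇_α f)(z) = −(1+κ|z|²) ∂f/∂z + α z̄ f(z). -/
noncomputable def nabla (κ α : ℝ) (f : ℂ → ℂ) (z : ℂ) : ℂ :=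
  -((1 + κ * Complex.normSq z : ℝ) : ℂ) * wderiv f z + (α : ℂ) * (starRingEnd ℂ) z * f z

/-- (∇*_α f)(z) = (1+κ|z|²) ∂f/∂z̄ + (α−κ) z f(z). -/
noncomputable def nablaStar (κ α : ℝ) (f : ℂ → ℂ) (z : ℂ) : ℂ :=
  ((1 + κ * Complex.normSq z : ℝ) : ℂ) * wderivBar f z + ((α - κ : ℝ) : ℂ) * z * f z

/-- ∇_{ν+κ} ∘ ∇_{ν+2κ} ∘ ⋯ ∘ ∇_{ν+mκ} (the identity when m = 0). -/
noncomputable def nablaChain (κ : ℝ) : ℕ → ℝ → (ℂ → ℂ) → (ℂ → ℂ)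
  | 0, _, f => f
  | m + 1, ν, f => nabla κ (ν + κ) (nablaChain κ m (ν + κ) f)

/-- (D g)(z) = (1+κ|z|²)² ∂g/∂z. -/
noncomputable def Dop (κ : ℝ) (g : ℂ → ℂ) (z : ℂ) : ℂ :=
  ((1 + κ * Complex.normSq z : ℝ) : ℂ) ^ 2 * wderiv g z

/-- Generalized binomial coefficient C(r,k) for real r. -/
noncomputable def genBinom (r : ℝ) (k : ℕ) : ℝ :=
  (∏ i ∈ Finset.range k, (r - i)) / (Nat.factorial k)

/-- Jacobi polynomial P_j^{(a,b)}(x) with real parameters a, b. -/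
noncomputable def jacobiP (a b : ℝ) (j : ℕ) (x : ℝ) : ℝ :=
  ∑ s ∈ Finset.range (j + 1),
    genBinom ((j : ℝ) + a) (j - s) * genBinom ((j : ℝ) + b) s *
      ((x - 1) / 2) ^ s * ((x + 1) / 2) ^ (j - s)

/-- Pochhammer symbol (a)_n = a(a+1)⋯(a+n−1). -/
noncomputable def risingFactorial (a : ℝ) (n : ℕ) : ℝ :=
  ∏ i ∈ Finset.range n, (a + i)

lemma clm_key (L : ℂ →L[ℝ] ℂ) (c : ℂ) :
    L c - Complex.I * L (c * Complex.I) = c * (L 1 - Complex.I * L Complex.I) := by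
  have h1 : c = (c.re : ℝ) • (1:ℂ) + (c.im : ℝ) • Complex.I := by
    rw [Complex.real_smul, Complex.real_smul, mul_one, Complex.re_add_im]
  have h2 : c * Complex.I = (-c.im : ℝ) • (1:ℂ) + (c.re : ℝ) • Complex.I := by
    rw [Complex.real_smul, Complex.real_smul, mul_one]
    rw [Complex.ext_iff]; simp
  rw [h2, map_add, L.map_smul, L.map_smul]
  nth_rewrite 1 [h1]
  rw [map_add, L.map_smul, L.map_smul]
  nth_rewrite 5 [h1]
  simp only [Complex.real_smul]
  push_cast
  linear_combination ((c.im:ℂ) * L Complex.I) * Complex.I_mul_I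

lemma wderiv_comp_const_mul (f : ℂ → ℂ) (c : ℂ) (hc : c ≠ 0) (z : ℂ) :
    wderiv (fun w => f (c * w)) z = c * wderiv f (c * z) := by
  by_cases hd : DifferentiableAt ℝ f (c * z)
  · have hmul : HasFDerivAt (fun w : ℂ => c * w) (c • (1 : ℂ →L[ℝ] ℂ)) z := by
      have h0 := (ContinuousLinearMap.mul ℝ ℂ c).hasFDerivAt (x := z)
      convert h0 using 1 <;> ext w <;> simp
    have hcomp : HasFDerivAt (fun w => f (c * w))
        ((fderiv ℝ f (c * z)).comp (c • (1 : ℂ →L[ℝ] ℂ))) z :=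
      (hd.hasFDerivAt.comp z hmul)
    rw [wderiv, wderiv, hcomp.fderiv]
    simp only [ContinuousLinearMap.comp_apply, ContinuousLinearMap.smul_apply,
      ContinuousLinearMap.one_apply, smul_eq_mul, mul_one]
    have := clm_key (fderiv ℝ f (c * z)) c
    field_simp
    linear_combination this
  · have hd2 : ¬ DifferentiableAt ℝ (fun w => f (c * w)) z := by
      intro h
      apply hd
      have h' : DifferentiableAt ℝ (fun w => f (c * w)) (c⁻¹ * (c * z)) := by
        rw [inv_mul_cancel_left₀ hc]; exact h
      have h2 : DifferentiableAt ℝ ((fun w => f (c * w)) ∘ (fun x => c⁻¹ * x)) (c * z) :=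
        DifferentiableAt.comp _ h' (differentiableAt_id.const_mul _)
      have he : ((fun w => f (c * w)) ∘ (fun x => c⁻¹ * x)) = f := by
        funext x; simp [Function.comp, mul_inv_cancel_left₀ hc]
      rwa [he] at h2
    rw [wderiv, wderiv, fderiv_zero_of_not_differentiableAt hd,
      fderiv_zero_of_not_differentiableAt hd2]
    simp

lemma wderiv_const_mul (f : ℂ → ℂ) (a : ℂ) (z : ℂ) :
    wderiv (fun w => a * f w) z = a * wderiv f z := by
  by_cases ha : a = 0
  · simp only [ha, zero_mul, wderiv]
    rw [fderiv_fun_const]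
    simp
  by_cases hd : DifferentiableAt ℝ f z
  · rw [wderiv, wderiv, fderiv_const_mul hd]
    simp only [ContinuousLinearMap.smul_apply, smul_eq_mul]
    ring
  · have hd2 : ¬ DifferentiableAt ℝ (fun w => a * f w) z := by
      intro h
      apply hd
      have : DifferentiableAt ℝ (fun w => a⁻¹ * (a * f w)) z := h.const_mul _
      simpa [inv_mul_cancel_left₀ ha] using this
    rw [wderiv, wderiv, fderiv_zero_of_not_differentiableAt hd,
      fderiv_zero_of_not_differentiableAt hd2]
    simp

lemma wderiv_homog {f : ℂ → ℂ} {c : ℂ} (hc : c ≠ 0) {k : ℤ}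
    (hf : ∀ z, f (c * z) = c ^ k * f z) (z : ℂ) :
    wderiv f (c * z) = c ^ (k - 1) * wderiv f z := by
  have h1 : wderiv (fun w => f (c * w)) z = c * wderiv f (c * z) :=
    wderiv_comp_const_mul f c hc z
  have h2 : (fun w => f (c * w)) = (fun w => c ^ k * f w) := funext hf
  rw [h2, wderiv_const_mul] at h1
  have := h1.symm
  rw [zpow_sub_one₀ hc]
  field_simp at this ⊢
  linear_combination this

lemma nabla_homog (κ α : ℝ) {f : ℂ → ℂ} {c : ℂ} (hc : c ≠ 0) (hc1 : Complex.normSq c = 1)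
    {k : ℤ} (hf : ∀ z, f (c * z) = c ^ k * f z) (z : ℂ) :
    nabla κ α f (c * z) = c ^ (k - 1) * nabla κ α f z := by
  have hcc : (starRingEnd ℂ) c = c⁻¹ := by
    have h : c * (starRingEnd ℂ) c = 1 := by
      rw [Complex.mul_conj, hc1]; norm_num
    exact eq_inv_of_mul_eq_one_right h
  have hns : Complex.normSq (c * z) = Complex.normSq z := by
    rw [Complex.normSq_mul, hc1, one_mul]
  have hw := wderiv_homog hc hf z
  simp only [nabla, hns, hf z, map_mul, hcc, hw]
  have hck : c⁻¹ * c ^ k = c ^ (k - 1) := by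
    rw [zpow_sub_one₀ hc]; ring
  linear_combination ((α:ℂ) * (starRingEnd ℂ) z * f z) * hck

lemma nablaChain_homog (κ : ℝ) {c : ℂ} (hc : c ≠ 0) (hc1 : Complex.normSq c = 1) {k : ℤ} :
    ∀ (m : ℕ) (ν : ℝ) (f : ℂ → ℂ), (∀ z, f (c * z) = c ^ k * f z) →
      ∀ z, nablaChain κ m ν f (c * z) = c ^ (k - m) * nablaChain κ m ν f z := by
  intro m
  induction m with
  | zero => intro ν f hf z; simpa [nablaChain] using hf z
  | succ m ih =>
    intro ν f hf z
    have ihv := ih (ν + κ) f hf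
    have h := nabla_homog κ (ν + κ) hc hc1 (k := k - m) ihv z
    simp only [nablaChain]
    rw [h]
    congr 1
    push_cast
    ring_nf

theorem stmt15 (κ : ℝ) (hκ : κ ≠ 0) (ν : ℝ) (m n n' : ℕ) (hnn : n ≠ n')
    (hint : MeasureTheory.IntegrableOn
      (fun z : ℂ =>
        nablaChain κ m ν
            (fun w => (((1 + κ * Complex.normSq w) ^ (-(ν / κ + m)) : ℝ) : ℂ) * w ^ n) z *
          (starRingEnd ℂ)
            (nablaChain κ m ν
              (fun w => (((1 + κ * Complex.normSq w) ^ (-(ν / κ + m)) : ℝ) : ℂ) * w ^ n') z) *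
          (((1 + κ * Complex.normSq z) ^ (-2 : ℝ) : ℝ) : ℂ))
      {z : ℂ | 0 < 1 + κ * Complex.normSq z} volume) :
    ∫ z in {z : ℂ | 0 < 1 + κ * Complex.normSq z},
        (nablaChain κ m ν
            (fun w => (((1 + κ * Complex.normSq w) ^ (-(ν / κ + m)) : ℝ) : ℂ) * w ^ n) z *
          (starRingEnd ℂ)
            (nablaChain κ m ν
              (fun w => (((1 + κ * Complex.normSq w) ^ (-(ν / κ + m)) : ℝ) : ℂ) * w ^ n') z) *
          (((1 + κ * Complex.normSq z) ^ (-2 : ℝ) : ℝ) : ℂ)) ∂volume = 0 := by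
  classical
  set r : ℝ := -(ν / κ + m) with hr
  set f₁ : ℂ → ℂ := fun w => (((1 + κ * Complex.normSq w) ^ r : ℝ) : ℂ) * w ^ n with hf₁
  set f₂ : ℂ → ℂ := fun w => (((1 + κ * Complex.normSq w) ^ r : ℝ) : ℂ) * w ^ n' with hf₂
  set G : ℂ → ℂ := fun z =>
    nablaChain κ m ν f₁ z * (starRingEnd ℂ) (nablaChain κ m ν f₂ z) *
      (((1 + κ * Complex.normSq z) ^ (-2 : ℝ) : ℝ) : ℂ) with hG
  set S : Set ℂ := {z : ℂ | 0 < 1 + κ * Complex.normSq z} with hS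
  -- the rotation constant
  set d : ℤ := (n : ℤ) - (n' : ℤ) with hd
  have hd0 : d ≠ 0 := by
    simp only [hd, sub_ne_zero]
    exact_mod_cast hnn
  set c : ℂ := Complex.exp ((Real.pi / d : ℝ) * Complex.I) with hcdef
  have habs : ‖c‖ = 1 := Complex.norm_exp_ofReal_mul_I _
  have hc0 : c ≠ 0 := Complex.exp_ne_zero _
  have hc1 : Complex.normSq c = 1 := by
    rw [Complex.normSq_eq_norm_sq, habs]; norm_num
  have hck : c ^ d = -1 := by
    rw [hcdef, ← Complex.exp_int_mul]
    have : (d : ℂ) * ((Real.pi / d : ℝ) * Complex.I) = Real.pi * Complex.I := by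
      have hdc : (d : ℂ) ≠ 0 := Int.cast_ne_zero.mpr hd0
      push_cast
      field_simp
    rw [this, Complex.exp_pi_mul_I]
  -- homogeneity of the two chain functions
  have hbase : ∀ (nn : ℕ) (z : ℂ),
      (((1 + κ * Complex.normSq (c * z)) ^ r : ℝ) : ℂ) * (c * z) ^ nn =
        c ^ (nn : ℤ) * ((((1 + κ * Complex.normSq z) ^ r : ℝ) : ℂ) * z ^ nn) := by
    intro nn z
    rw [Complex.normSq_mul, hc1, one_mul, mul_pow, zpow_natCast]
    ring
  have hΦ1 : ∀ z, nablaChain κ m ν f₁ (c * z) =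
      c ^ ((n : ℤ) - m) * nablaChain κ m ν f₁ z :=
    nablaChain_homog κ hc0 hc1 m ν f₁ (hbase n)
  have hΦ2 : ∀ z, nablaChain κ m ν f₂ (c * z) =
      c ^ ((n' : ℤ) - m) * nablaChain κ m ν f₂ z :=
    nablaChain_homog κ hc0 hc1 m ν f₂ (hbase n')
  have hcc : (starRingEnd ℂ) c = c⁻¹ := by
    have h : c * (starRingEnd ℂ) c = 1 := by
      rw [Complex.mul_conj, hc1]; norm_num
    exact eq_inv_of_mul_eq_one_right h
  have hGhom : ∀ z, G (c * z) = c ^ d * G z := by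
    intro z
    simp only [hG]
    rw [hΦ1 z, hΦ2 z, Complex.normSq_mul, hc1, one_mul, map_mul, map_zpow₀, hcc, inv_zpow, ← zpow_neg]
    rw [show (c ^ ((n:ℤ) - m) * nablaChain κ m ν f₁ z) *
        (c ^ (-((n':ℤ) - m)) * (starRingEnd ℂ) (nablaChain κ m ν f₂ z)) *
        (((1 + κ * Complex.normSq z) ^ (-2 : ℝ) : ℝ) : ℂ) =
        (c ^ ((n:ℤ) - m) * c ^ (-((n':ℤ) - m))) * G z by rw [hG]; ring]
    rw [← zpow_add₀ hc0]
    congr 2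
    ring
  -- rotation is measure preserving and maps S onto S
  have hmem : c ∈ Metric.sphere (0 : ℂ) 1 := by
    simp [habs]
  set u : Circle := ⟨c, hmem⟩ with hu
  have hrot : ∀ z, rotation u z = c * z := fun z => rotation_apply u z
  have hmp : MeasurePreserving (rotation u) volume volume :=
    (rotation u).measurePreserving
  have hemb : MeasurableEmbedding (rotation u) :=
    (rotation u).toHomeomorph.measurableEmbedding
  have hpre : (rotation u) ⁻¹' S = S := by
    ext z
    simp only [Set.mem_preimage, hS, Set.mem_setOf_eq, hrot, Complex.normSq_mul, hc1, one_mul]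
  have key := hmp.setIntegral_preimage_emb hemb G S
  rw [hpre] at key
  have key2 : ∫ z in S, G ((rotation u) z) ∂volume = c ^ d * ∫ z in S, G z ∂volume := by
    rw [show (fun z => G ((rotation u) z)) = (fun z => c ^ d * G z) by
      funext z; rw [hrot z, hGhom z]]
    exact integral_const_mul _ _
  have : (∫ z in S, G z ∂volume) = c ^ d * ∫ z in S, G z ∂volume := by
    rw [← key2]; exact key.symm
  rw [hck] at this
  have h2 : (∫ z in S, G z ∂volume) + (∫ z in S, G z ∂volume) = 0 := by
    linear_combination this
  exact add_self_eq_zero.mp h2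
end

section
/- Let ν ≠ 0 be real and let m, n ≥ 0 be integers. With κ = 0, so that (∇_ν f)(z) = −(∂f/∂z)(z) + ν z̄ f(z), one has for every z ∈ ℂ: e^{ν|z|²} · (∇_ν ∘ ⋯ ∘ ∇_ν)_{m times}[w ↦ e^{−ν|w|²} w^n](z) = (−1)^m e^{2ν|z|²} (∂^m/∂z^m)[w ↦ e^{−2ν|w|²} w^n](z) = H_{m,n}^ν(z), where H_{m,n}^ν(z) = ((−1)^{m+n}/(2ν)^n) · e^{2ν|z|²} · (∂^{m+n}/∂z^m∂z̄^n)[w ↦ e^{−2ν|w|²}](z) is the complex Hermite polynomial. -/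
open Complex MeasureTheory Filter

namespace S18

noncomputable def conjCLM : ℂ →L[ℝ] ℂ := Complex.conjCLE.toContinuousLinearMap

lemma conjCLM_apply (z : ℂ) : conjCLM z = starRingEnd ℂ z := rfl

lemma hasFDerivAt_conj (z : ℂ) : HasFDerivAt (fun w => starRingEnd ℂ w) conjCLM z :=
  conjCLM.hasFDerivAt

lemma wderiv_of_hasFDerivAt {f : ℂ → ℂ} {L : ℂ →L[ℝ] ℂ} {z : ℂ} (h : HasFDerivAt f L z) :
    wderiv f z = (L 1 - Complex.I * L Complex.I) / 2 := by rw [wderiv, h.fderiv]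

lemma wderivBar_of_hasFDerivAt {f : ℂ → ℂ} {L : ℂ →L[ℝ] ℂ} {z : ℂ} (h : HasFDerivAt f L z) :
    wderivBar f z = (L 1 + Complex.I * L Complex.I) / 2 := by rw [wderivBar, h.fderiv]

lemma wderiv_const (c : ℂ) (z : ℂ) : wderiv (fun _ => c) z = 0 := by
  simp [wderiv, fderiv_const]

lemma wderivBar_const (c : ℂ) (z : ℂ) : wderivBar (fun _ => c) z = 0 := by
  simp [wderivBar, fderiv_const]

lemma wderiv_id (z : ℂ) : wderiv (fun w => w) z = 1 := by
  rw [wderiv, fderiv_id']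
  simp [Complex.I_mul_I]

lemma wderivBar_id (z : ℂ) : wderivBar (fun w => w) z = 0 := by
  rw [wderivBar, fderiv_id']
  simp [Complex.I_mul_I]

lemma wderiv_conj (z : ℂ) : wderiv (fun w => starRingEnd ℂ w) z = 0 := by
  rw [wderiv_of_hasFDerivAt (hasFDerivAt_conj z)]
  simp [conjCLM_apply, Complex.conj_I]

lemma wderivBar_conj (z : ℂ) : wderivBar (fun w => starRingEnd ℂ w) z = 1 := by
  rw [wderivBar_of_hasFDerivAt (hasFDerivAt_conj z)]
  simp [conjCLM_apply, Complex.conj_I]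

lemma wderiv_add {f g : ℂ → ℂ} {z : ℂ} (hf : DifferentiableAt ℝ f z)
    (hg : DifferentiableAt ℝ g z) :
    wderiv (fun w => f w + g w) z = wderiv f z + wderiv g z := by
  simp only [wderiv, fderiv_fun_add hf hg, ContinuousLinearMap.add_apply]
  ring

lemma wderivBar_add {f g : ℂ → ℂ} {z : ℂ} (hf : DifferentiableAt ℝ f z)
    (hg : DifferentiableAt ℝ g z) :
    wderivBar (fun w => f w + g w) z = wderivBar f z + wderivBar g z := by
  simp only [wderivBar, fderiv_fun_add hf hg, ContinuousLinearMap.add_apply]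
  ring

lemma wderiv_mul {f g : ℂ → ℂ} {z : ℂ} (hf : DifferentiableAt ℝ f z)
    (hg : DifferentiableAt ℝ g z) :
    wderiv (fun w => f w * g w) z = wderiv f z * g z + f z * wderiv g z := by
  simp only [wderiv, fderiv_fun_mul hf hg, ContinuousLinearMap.add_apply,
    ContinuousLinearMap.smul_apply, smul_eq_mul]
  ring

lemma wderivBar_mul {f g : ℂ → ℂ} {z : ℂ} (hf : DifferentiableAt ℝ f z)
    (hg : DifferentiableAt ℝ g z) :
    wderivBar (fun w => f w * g w) z = wderivBar f z * g z + f z * wderivBar g z := by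
  simp only [wderivBar, fderiv_fun_mul hf hg, ContinuousLinearMap.add_apply,
    ContinuousLinearMap.smul_apply, smul_eq_mul]
  ring

lemma wderiv_const_mul {f : ℂ → ℂ} {z : ℂ} (hf : DifferentiableAt ℝ f z) (c : ℂ) :
    wderiv (fun w => c * f w) z = c * wderiv f z := by
  simp only [wderiv, fderiv_const_mul hf c, ContinuousLinearMap.smul_apply, smul_eq_mul]
  ring

lemma wderivBar_const_mul {f : ℂ → ℂ} {z : ℂ} (hf : DifferentiableAt ℝ f z) (c : ℂ) :
    wderivBar (fun w => c * f w) z = c * wderivBar f z := by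
  simp only [wderivBar, fderiv_const_mul hf c, ContinuousLinearMap.smul_apply, smul_eq_mul]
  ring

/-- The exponential `E c w = exp (c |w|²)`. -/
noncomputable def E (c : ℂ) (w : ℂ) : ℂ := Complex.exp (c * (Complex.normSq w : ℂ))

lemma hasFDerivAt_E (c z : ℂ) :
    HasFDerivAt (E c)
      (Complex.exp (c * (Complex.normSq z : ℂ)) •
        (c • (z • conjCLM + (starRingEnd ℂ z) • (1 : ℂ →L[ℝ] ℂ)))) z := by
  have h1 : HasFDerivAt (fun w : ℂ => w * starRingEnd ℂ w)
      (z • conjCLM + (starRingEnd ℂ z) • (1 : ℂ →L[ℝ] ℂ)) z := by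
    exact (hasFDerivAt_id z).mul (hasFDerivAt_conj z)
  have h2 : HasFDerivAt (fun w : ℂ => c * (Complex.normSq w : ℂ))
      (c • (z • conjCLM + (starRingEnd ℂ z) • (1 : ℂ →L[ℝ] ℂ))) z := by
    have := h1.const_mul c
    simp only [Complex.mul_conj] at this
    exact this
  exact h2.cexp

lemma differentiable_E (c : ℂ) : Differentiable ℝ (E c) :=
  fun z => (hasFDerivAt_E c z).differentiableAt

lemma wderiv_E (c z : ℂ) : wderiv (E c) z = c * starRingEnd ℂ z * E c z := by
  rw [wderiv_of_hasFDerivAt (hasFDerivAt_E c z)]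
  simp only [ContinuousLinearMap.smul_apply, ContinuousLinearMap.add_apply,
    ContinuousLinearMap.one_apply, smul_eq_mul, conjCLM_apply, map_one, Complex.conj_I,
    E]
  ring_nf
  simp [Complex.I_sq]
  ring

lemma wderivBar_E (c z : ℂ) : wderivBar (E c) z = c * z * E c z := by
  rw [wderivBar_of_hasFDerivAt (hasFDerivAt_E c z)]
  simp only [ContinuousLinearMap.smul_apply, ContinuousLinearMap.add_apply,
    ContinuousLinearMap.one_apply, smul_eq_mul, conjCLM_apply, map_one, Complex.conj_I,
    E]
  ring_nf
  simp [Complex.I_sq]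
  ring

/-- Polynomials in `z` and `conj z`. -/
inductive WPoly : (ℂ → ℂ) → Prop
  | const (c : ℂ) : WPoly (fun _ => c)
  | id : WPoly (fun z => z)
  | conj : WPoly (fun z => starRingEnd ℂ z)
  | add {f g} : WPoly f → WPoly g → WPoly (fun z => f z + g z)
  | mul {f g} : WPoly f → WPoly g → WPoly (fun z => f z * g z)

lemma WPoly.differentiable {f : ℂ → ℂ} (h : WPoly f) : Differentiable ℝ f := by
  induction h with
  | const c => exact differentiable_const c
  | id => exact differentiable_id
  | conj => exact conjCLM.differentiable
  | add _ _ ihf ihg => exact ihf.add ihg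
  | mul _ _ ihf ihg => exact ihf.mul ihg

lemma WPoly.wderiv_mem {f : ℂ → ℂ} (h : WPoly f) :
    WPoly (wderiv f) ∧ WPoly (wderivBar f) := by
  induction h with
  | const c =>
    rw [show wderiv (fun _ => c) = fun _ => (0:ℂ) from funext (wderiv_const c),
      show wderivBar (fun _ => c) = fun _ => (0:ℂ) from funext (wderivBar_const c)]
    exact ⟨.const 0, .const 0⟩
  | id =>
    rw [show wderiv (fun w => w) = fun _ => (1:ℂ) from funext wderiv_id,
      show wderivBar (fun w => w) = fun _ => (0:ℂ) from funext wderivBar_id]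
    exact ⟨.const 1, .const 0⟩
  | conj =>
    rw [show wderiv (fun w => starRingEnd ℂ w) = fun _ => (0:ℂ) from funext wderiv_conj,
      show wderivBar (fun w => starRingEnd ℂ w) = fun _ => (1:ℂ) from funext wderivBar_conj]
    exact ⟨.const 0, .const 1⟩
  | @add f g hf hg ihf ihg =>
    rw [show wderiv (fun z => f z + g z) = fun z => wderiv f z + wderiv g z from
        funext fun z => wderiv_add (hf.differentiable z) (hg.differentiable z),
      show wderivBar (fun z => f z + g z) = fun z => wderivBar f z + wderivBar g z from
        funext fun z => wderivBar_add (hf.differentiable z) (hg.differentiable z)]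
    exact ⟨ihf.1.add ihg.1, ihf.2.add ihg.2⟩
  | @mul f g hf hg ihf ihg =>
    rw [show wderiv (fun z => f z * g z) = fun z => wderiv f z * g z + f z * wderiv g z from
        funext fun z => wderiv_mul (hf.differentiable z) (hg.differentiable z),
      show wderivBar (fun z => f z * g z)
          = fun z => wderivBar f z * g z + f z * wderivBar g z from
        funext fun z => wderivBar_mul (hf.differentiable z) (hg.differentiable z)]
    exact ⟨(ihf.1.mul hg).add (hf.mul ihg.1), (ihf.2.mul hg).add (hf.mul ihg.2)⟩

lemma wpoly_pow (n : ℕ) : WPoly (fun w : ℂ => w ^ n) := by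
  induction n with
  | zero =>
    rw [show (fun w : ℂ => w ^ 0) = fun _ => (1:ℂ) from funext fun w => pow_zero w]
    exact .const 1
  | succ n ih =>
    rw [show (fun w : ℂ => w ^ (n+1)) = fun w => w ^ n * w from funext fun w => pow_succ w n]
    exact ih.mul .id

/-- The operator `T h = -∂h + 2ν z̄ h`. -/
noncomputable def Top (ν : ℝ) (h : ℂ → ℂ) : ℂ → ℂ :=
  fun z => -wderiv h z + 2 * (ν : ℂ) * starRingEnd ℂ z * h z

lemma WPoly.top {h : ℂ → ℂ} (ν : ℝ) (hh : WPoly h) : WPoly (Top ν h) := by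
  have h1 : WPoly (fun z => ((-1:ℂ) * wderiv h z) +
      ((2 * (ν:ℂ) * starRingEnd ℂ z) * h z)) :=
    .add (.mul (.const (-1)) hh.wderiv_mem.1) (.mul (.mul (.const _) .conj) hh)
  have h2 : Top ν h = fun z => ((-1:ℂ) * wderiv h z) +
      ((2 * (ν:ℂ) * starRingEnd ℂ z) * h z) := funext fun z => by unfold Top; ring
  rw [h2]; exact h1

lemma wpoly_top_iter (ν : ℝ) {h : ℂ → ℂ} (hh : WPoly h) (m : ℕ) :
    WPoly ((Top ν)^[m] h) := by
  induction m with
  | zero => exact hh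
  | succ m ih => rw [Function.iterate_succ_apply']; exact ih.top ν

lemma top_iter_const (ν : ℝ) (c : ℂ) {h : ℂ → ℂ} (hh : WPoly h) (m : ℕ) :
    (Top ν)^[m] (fun w => c * h w) = fun w => c * (Top ν)^[m] h w := by
  induction m with
  | zero => rfl
  | succ m ih =>
    rw [Function.iterate_succ_apply', Function.iterate_succ_apply', ih]
    funext z
    have hd := (wpoly_top_iter ν hh m).differentiable z
    show -wderiv (fun w => c * (Top ν)^[m] h w) z
        + 2 * (ν:ℂ) * starRingEnd ℂ z * (c * (Top ν)^[m] h z)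
      = c * (-wderiv ((Top ν)^[m] h) z + 2 * (ν:ℂ) * starRingEnd ℂ z * (Top ν)^[m] h z)
    rw [wderiv_const_mul hd c]
    ring

lemma keyA (ν : ℝ) {h₀ : ℂ → ℂ} (hp : WPoly h₀) (m : ℕ) :
    ((nabla 0 ν)^[m] (fun w => E (-(ν:ℂ)) w * h₀ w)
        = fun z => E (-(ν:ℂ)) z * (Top ν)^[m] h₀ z) ∧
    (wderiv^[m] (fun w => E (-(2*(ν:ℂ))) w * h₀ w)
        = fun z => E (-(2*(ν:ℂ))) z * ((-1:ℂ)^m * (Top ν)^[m] h₀ z)) := by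
  induction m with
  | zero => constructor <;> (funext z; simp)
  | succ m ih =>
    obtain ⟨h1, h2⟩ := ih
    have hH : WPoly ((Top ν)^[m] h₀) := wpoly_top_iter ν hp m
    constructor
    · rw [Function.iterate_succ_apply', h1]
      funext z
      have hw : wderiv (fun w => E (-(ν:ℂ)) w * (Top ν)^[m] h₀ w) z
          = wderiv (E (-(ν:ℂ))) z * (Top ν)^[m] h₀ z
            + E (-(ν:ℂ)) z * wderiv ((Top ν)^[m] h₀) z :=
        wderiv_mul (differentiable_E _ z) (hH.differentiable z)
      rw [Function.iterate_succ_apply']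
      simp only [nabla, hw, wderiv_E]
      push_cast
      unfold Top
      ring
    · rw [Function.iterate_succ_apply', h2]
      funext z
      have hG : DifferentiableAt ℝ (fun w => (-1:ℂ)^m * (Top ν)^[m] h₀ w) z :=
        (hH.differentiable z).const_mul _
      have hw : wderiv (fun w => E (-(2*(ν:ℂ))) w * ((-1:ℂ)^m * (Top ν)^[m] h₀ w)) z
          = wderiv (E (-(2*(ν:ℂ)))) z * ((-1:ℂ)^m * (Top ν)^[m] h₀ z)
            + E (-(2*(ν:ℂ))) z * wderiv (fun w => (-1:ℂ)^m * (Top ν)^[m] h₀ w) z :=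
        wderiv_mul (differentiable_E _ z) hG
      rw [Function.iterate_succ_apply', hw, wderiv_E,
        wderiv_const_mul (hH.differentiable z)]
      unfold Top
      ring

lemma differentiable_pow_r (n : ℕ) : Differentiable ℝ (fun w : ℂ => w ^ n) :=
  (wpoly_pow n).differentiable

lemma wderivBar_pow (n : ℕ) (z : ℂ) : wderivBar (fun w : ℂ => w ^ n) z = 0 := by
  induction n with
  | zero => exact wderivBar_const 1 z
  | succ k ihk =>
    have h1 : wderivBar (fun w : ℂ => w ^ (k+1)) z
        = wderivBar (fun w : ℂ => w ^ k) z * z + z ^ k * wderivBar (fun w : ℂ => w) z := by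
      rw [show (fun w : ℂ => w ^ (k+1)) = fun w => w ^ k * w from
        funext fun w => pow_succ w k]
      exact wderivBar_mul (differentiable_pow_r k z) (WPoly.id.differentiable z)
    rw [h1, ihk, wderivBar_id]
    ring

lemma keyB (c : ℂ) (n : ℕ) :
    wderivBar^[n] (E c) = fun w => E c w * (c ^ n * w ^ n) := by
  induction n with
  | zero => funext w; simp
  | succ n ih =>
    rw [Function.iterate_succ_apply', ih]
    funext z
    have hpw : DifferentiableAt ℝ (fun w : ℂ => w ^ n) z := differentiable_pow_r n z
    have hbpow : wderivBar (fun w : ℂ => w ^ n) z = 0 := wderivBar_pow n z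
    have hG : DifferentiableAt ℝ (fun w : ℂ => c ^ n * w ^ n) z := hpw.const_mul _
    rw [wderivBar_mul (differentiable_E _ z) hG, wderivBar_E,
      wderivBar_const_mul hpw, hbpow]
    ring

end S18

theorem stmt18 (ν : ℝ) (hν : ν ≠ 0) (m n : ℕ) (z : ℂ) :
    Complex.exp ((ν : ℂ) * (Complex.normSq z : ℂ)) *
        (nabla 0 ν)^[m]
          (fun w => Complex.exp (-((ν : ℂ) * (Complex.normSq w : ℂ))) * w ^ n) z
      = (-1 : ℂ) ^ m * Complex.exp (2 * (ν : ℂ) * (Complex.normSq z : ℂ)) *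
          wderiv^[m]
            (fun w => Complex.exp (-(2 * (ν : ℂ) * (Complex.normSq w : ℂ))) * w ^ n) z ∧
    (-1 : ℂ) ^ m * Complex.exp (2 * (ν : ℂ) * (Complex.normSq z : ℂ)) *
        wderiv^[m]
          (fun w => Complex.exp (-(2 * (ν : ℂ) * (Complex.normSq w : ℂ))) * w ^ n) z
      = ((-1 : ℂ) ^ (m + n) / (2 * (ν : ℂ)) ^ n) *
          Complex.exp (2 * (ν : ℂ) * (Complex.normSq z : ℂ)) *
          wderiv^[m] (wderivBar^[n]
            (fun w => Complex.exp (-(2 * (ν : ℂ) * (Complex.normSq w : ℂ))))) z := by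
  classical
  open S18 in
  -- rewrite lambdas into E-form
  have e1 : (fun w => Complex.exp (-((ν : ℂ) * (Complex.normSq w : ℂ))) * w ^ n)
      = fun w => S18.E (-(ν:ℂ)) w * (fun w : ℂ => w ^ n) w :=
    funext fun w => by simp [S18.E, neg_mul]
  have e2 : (fun w => Complex.exp (-(2 * (ν : ℂ) * (Complex.normSq w : ℂ))) * w ^ n)
      = fun w => S18.E (-(2*(ν:ℂ))) w * (fun w : ℂ => w ^ n) w :=
    funext fun w => by simp [S18.E, neg_mul]
  have e3 : (fun w => Complex.exp (-(2 * (ν : ℂ) * (Complex.normSq w : ℂ))))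
      = S18.E (-(2*(ν:ℂ))) :=
    funext fun w => by simp [S18.E, neg_mul]
  have hK := S18.keyA ν (S18.wpoly_pow n) m
  set T : ℂ → ℂ := (S18.Top ν)^[m] (fun w : ℂ => w ^ n) with hT
  set x : ℂ := ((Complex.normSq z : ℝ) : ℂ) with hxdef
  have hx1 : Complex.exp ((ν:ℂ) * x) * Complex.exp ((-(ν:ℂ)) * x) = 1 := by
    rw [← Complex.exp_add, show (ν:ℂ)*x + (-(ν:ℂ))*x = 0 by ring, Complex.exp_zero]
  have hx2 : Complex.exp (2*(ν:ℂ) * x) * Complex.exp ((-(2*(ν:ℂ))) * x) = 1 := by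
    rw [← Complex.exp_add, show 2*(ν:ℂ)*x + (-(2*(ν:ℂ)))*x = 0 by ring, Complex.exp_zero]
  have hm1 : ((-1:ℂ))^m * (-1:ℂ)^m = 1 := by
    rw [← mul_pow]; norm_num
  have hEν : S18.E (-(ν:ℂ)) z = Complex.exp ((-(ν:ℂ)) * x) := rfl
  have hE2ν : S18.E (-(2*(ν:ℂ))) z = Complex.exp ((-(2*(ν:ℂ))) * x) := rfl
  have hLHS1 : Complex.exp ((ν : ℂ) * x) *
      (nabla 0 ν)^[m]
        (fun w => Complex.exp (-((ν : ℂ) * (Complex.normSq w : ℂ))) * w ^ n) z = T z := by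
    rw [e1, hK.1]
    show Complex.exp ((ν:ℂ) * x) * (S18.E (-(ν:ℂ)) z * T z) = T z
    rw [hEν, ← mul_assoc, hx1, one_mul]
  have hMID : (-1 : ℂ) ^ m * Complex.exp (2 * (ν : ℂ) * x) *
      wderiv^[m]
        (fun w => Complex.exp (-(2 * (ν : ℂ) * (Complex.normSq w : ℂ))) * w ^ n) z = T z := by
    rw [e2, hK.2]
    show (-1 : ℂ) ^ m * Complex.exp (2 * (ν : ℂ) * x) *
        (S18.E (-(2*(ν:ℂ))) z * ((-1:ℂ)^m * T z)) = T z
    rw [hE2ν]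
    calc (-1 : ℂ) ^ m * Complex.exp (2 * (ν : ℂ) * x) *
        (Complex.exp ((-(2*(ν:ℂ))) * x) * ((-1:ℂ)^m * T z))
        = ((-1:ℂ)^m * (-1:ℂ)^m) *
            (Complex.exp (2*(ν:ℂ) * x) * Complex.exp ((-(2*(ν:ℂ))) * x)) * T z := by ring
      _ = T z := by rw [hm1, hx2]; ring
  have hRHS : ((-1 : ℂ) ^ (m + n) / (2 * (ν : ℂ)) ^ n) *
      Complex.exp (2 * (ν : ℂ) * x) *
      wderiv^[m] (wderivBar^[n]
        (fun w => Complex.exp (-(2 * (ν : ℂ) * (Complex.normSq w : ℂ))))) z = T z := by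
    rw [e3, S18.keyB]
    have hc : WPoly (fun w : ℂ => (-(2*(ν:ℂ)))^n * w ^ n) :=
      .mul (.const _) (S18.wpoly_pow n)
    have hK2 := (S18.keyA ν hc m).2
    rw [show (fun w => S18.E (-(2*(ν:ℂ))) w * ((-(2*(ν:ℂ)))^n * w ^ n))
        = fun w => S18.E (-(2*(ν:ℂ))) w * (fun w : ℂ => (-(2*(ν:ℂ)))^n * w ^ n) w from rfl,
      hK2, S18.top_iter_const ν _ (S18.wpoly_pow n)]
    show ((-1 : ℂ) ^ (m + n) / (2 * (ν : ℂ)) ^ n) * Complex.exp (2 * (ν : ℂ) * x) *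
        (S18.E (-(2*(ν:ℂ))) z * ((-1:ℂ)^m * ((-(2*(ν:ℂ)))^n * T z))) = T z
    rw [hE2ν]
    have h2ν : (2 * (ν:ℂ)) ^ n ≠ 0 :=
      pow_ne_zero _ (mul_ne_zero two_ne_zero (Complex.ofReal_ne_zero.mpr hν))
    have hnegpow : (-(2*(ν:ℂ)))^n = (-1:ℂ)^n * (2*(ν:ℂ))^n := by
      rw [neg_pow]
    have hpadd : ((-1:ℂ))^(m+n) = (-1:ℂ)^m * (-1:ℂ)^n := pow_add _ _ _
    calc ((-1 : ℂ) ^ (m + n) / (2 * (ν : ℂ)) ^ n) * Complex.exp (2 * (ν : ℂ) * x) *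
        (Complex.exp ((-(2*(ν:ℂ))) * x) * ((-1:ℂ)^m * ((-(2*(ν:ℂ)))^n * T z)))
        = (((-1:ℂ)^m * (-1:ℂ)^m) * ((-1:ℂ)^n * (-1:ℂ)^n)) *
            ((2*(ν:ℂ))^n / (2*(ν:ℂ))^n) *
            (Complex.exp (2*(ν:ℂ) * x) * Complex.exp ((-(2*(ν:ℂ))) * x)) * T z := by
          rw [hnegpow, hpadd]; ring
      _ = T z := by
          rw [hm1, hx2, div_self h2ν]
          norm_num [← mul_pow]
  exact ⟨hLHS1.trans hMID.symm, hMID.trans hRHS.symm⟩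
end
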